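/- Let (u_i, v_i) be defined by u_1 = 2, v_1 = 1, u_{i+1} = 2u_i + 3v_i, v_{i+1} = u_i + 2v_i (so u_i² − 3v_i² = 1). Let A_i = (2u_i + 4, 6v_i) and B = (8, 0). Then the distance from the origin O to A_i equals 4u_i + 2, the distance from A_i to B equals 4u_i − 2, and the quadrilateral O A_i B A_{i+1} has perimeter 8(u_i + u_{i+1}) and area 24(v_{i+1} − v_i), and these are equal; hence O A_i B A_{i+1} is an equable lattice quadrilateral which is tangential (OA_i − A_iB + BA_{i+1} − A_{i+1}O = 0). -/

import Mathlib

/-- Shoelace (signed) area of the quadrilateral with vertices `P`, `Q`, `R`, `S`. -/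
noncomputable def quadArea (P Q R S : EuclideanSpace ℝ (Fin 2)) : ℝ :=
  ((P 0 * Q 1 - Q 0 * P 1) + (Q 0 * R 1 - R 0 * Q 1) +
   (R 0 * S 1 - S 0 * R 1) + (S 0 * P 1 - P 0 * S 1)) / 2

lemma dist_pi2 (x y : EuclideanSpace ℝ (Fin 2)) (a b c d : ℝ)
    (hx : x = !₂[a, b]) (hy : y = !₂[c, d]) :
    dist x y = Real.sqrt ((a - c) ^ 2 + (b - d) ^ 2) := by
  subst hx hy
  rw [EuclideanSpace.dist_eq, Fin.sum_univ_two]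
  simp [Real.dist_eq, sq_abs]

/-- For the Pell solutions `(u_i, v_i)` of `u² - 3v² = 1` with `(u_1, v_1) = (2, 1)` and
`A_i = (2u_i + 4, 6v_i)`, `B = (8, 0)`, `O = (0,0)`: `dist O A_i = 4u_i + 2`,
`dist A_i B = 4u_i - 2`, the quadrilateral `O A_i B A_{i+1}` has perimeter
`8(u_i + u_{i+1})`, area `24(v_{i+1} - v_i)`, these are equal (equable), and it is
tangential: `OA_i - A_iB + BA_{i+1} - A_{i+1}O = 0`. -/
theorem stmt8 (u v : ℕ → ℤ)
    (hu1 : u 1 = 2) (hv1 : v 1 = 1)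
    (hu : ∀ i, u (i + 1) = 2 * u i + 3 * v i)
    (hv : ∀ i, v (i + 1) = u i + 2 * v i)
    (A : ℕ → EuclideanSpace ℝ (Fin 2))
    (hA : ∀ i, A i = !₂[2 * (u i : ℝ) + 4, 6 * (v i : ℝ)])
    (O B : EuclideanSpace ℝ (Fin 2))
    (hO : O = !₂[0, 0]) (hB : B = !₂[8, 0])
    (i : ℕ) (hi : 1 ≤ i) :
    dist O (A i) = 4 * (u i : ℝ) + 2 ∧
    dist (A i) B = 4 * (u i : ℝ) - 2 ∧
    dist O (A i) + dist (A i) B + dist B (A (i + 1)) + dist (A (i + 1)) O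
      = 8 * ((u i : ℝ) + (u (i + 1) : ℝ)) ∧
    quadArea O (A i) B (A (i + 1)) = 24 * ((v (i + 1) : ℝ) - (v i : ℝ)) ∧
    quadArea O (A i) B (A (i + 1)) =
      dist O (A i) + dist (A i) B + dist B (A (i + 1)) + dist (A (i + 1)) O ∧
    dist O (A i) - dist (A i) B + dist B (A (i + 1)) - dist (A (i + 1)) O = 0 := by
  -- Pell invariant and positivity by induction
  have key : ∀ j, 1 ≤ j → u j ^ 2 - 3 * v j ^ 2 = 1 ∧ 1 ≤ u j ∧ 1 ≤ v j := by
    intro j hj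
    induction j with
    | zero => omega
    | succ k ih =>
      rcases Nat.eq_or_lt_of_le hj with h | h
      · have : k = 0 := by omega
        subst this
        simp [hu1, hv1]
      · have hk : 1 ≤ k := by omega
        obtain ⟨hp, h1, h2⟩ := ih hk
        refine ⟨?_, ?_, ?_⟩
        · rw [hu k, hv k]; ring_nf; nlinarith
        · rw [hu k]; nlinarith
        · rw [hv k]; nlinarith
  obtain ⟨hp, h1, h2⟩ := key i hi
  obtain ⟨hp', h1', h2'⟩ := key (i + 1) (by omega)
  -- real versions
  have hpR : (u i : ℝ) ^ 2 - 3 * (v i : ℝ) ^ 2 = 1 := by exact_mod_cast hp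
  have h1R : (1 : ℝ) ≤ (u i : ℝ) := by exact_mod_cast h1
  have hpR' : (u (i + 1) : ℝ) ^ 2 - 3 * (v (i + 1) : ℝ) ^ 2 = 1 := by exact_mod_cast hp'
  have h1R' : (1 : ℝ) ≤ (u (i + 1) : ℝ) := by exact_mod_cast h1'
  have huR : (u (i + 1) : ℝ) = 2 * u i + 3 * v i := by exact_mod_cast congrArg Int.cast (hu i)
  have hvR : (v (i + 1) : ℝ) = u i + 2 * v i := by exact_mod_cast congrArg Int.cast (hv i)
  -- distances
  have dOA : dist O (A i) = 4 * (u i : ℝ) + 2 := by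
    rw [dist_pi2 O (A i) _ _ _ _ hO (hA i)]
    have : ((0 : ℝ) - (2 * (u i : ℝ) + 4)) ^ 2 + (0 - 6 * (v i : ℝ)) ^ 2
        = (4 * (u i : ℝ) + 2) ^ 2 := by linear_combination (-12 : ℝ) * hpR
    rw [this, Real.sqrt_sq (by linarith)]
  have dAB : dist (A i) B = 4 * (u i : ℝ) - 2 := by
    rw [dist_pi2 (A i) B _ _ _ _ (hA i) hB]
    have : ((2 * (u i : ℝ) + 4) - 8) ^ 2 + (6 * (v i : ℝ) - 0) ^ 2
        = (4 * (u i : ℝ) - 2) ^ 2 := by linear_combination (-12 : ℝ) * hpR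
    rw [this, Real.sqrt_sq (by linarith)]
  have dBA' : dist B (A (i + 1)) = 4 * (u (i + 1) : ℝ) - 2 := by
    rw [dist_pi2 B (A (i+1)) _ _ _ _ hB (hA (i+1))]
    have : ((8 : ℝ) - (2 * (u (i+1) : ℝ) + 4)) ^ 2 + (0 - 6 * (v (i+1) : ℝ)) ^ 2
        = (4 * (u (i+1) : ℝ) - 2) ^ 2 := by linear_combination (-12 : ℝ) * hpR'
    rw [this, Real.sqrt_sq (by linarith)]
  have dA'O : dist (A (i + 1)) O = 4 * (u (i + 1) : ℝ) + 2 := by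
    rw [dist_pi2 (A (i+1)) O _ _ _ _ (hA (i+1)) hO]
    have : ((2 * (u (i+1) : ℝ) + 4) - 0) ^ 2 + (6 * (v (i+1) : ℝ) - 0) ^ 2
        = (4 * (u (i+1) : ℝ) + 2) ^ 2 := by linear_combination (-12 : ℝ) * hpR'
    rw [this, Real.sqrt_sq (by linarith)]
  have harea : quadArea O (A i) B (A (i + 1)) = 24 * ((v (i + 1) : ℝ) - (v i : ℝ)) := by
    simp only [quadArea, hO, hA, hB, PiLp.toLp_apply, Matrix.cons_val_zero, Matrix.cons_val_one,
      Matrix.head_cons]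
    ring
  refine ⟨dOA, dAB, ?_, harea, ?_, ?_⟩
  · rw [dOA, dAB, dBA', dA'O]; ring
  · rw [harea, dOA, dAB, dBA', dA'O, huR, hvR]; ring
  · rw [dOA, dAB, dBA', dA'O]; ring
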